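/- arXiv:2401.07321 — 5 statements merged into one kernel-verified Lean document; each statement's English description precedes it below -/
import Mathlib

section
/- The function f(n₁,…,n_k) = ∑_{d₁|n₁,…,d_k|n_k} μ(n₁/d₁)⋯μ(n_k/d_k) · (d₁⋯d_k)/lcm(d₁,…,d_k) is nonnegative for all positive integers n₁,…,n_k. -/
open Finset

noncomputable def zHom (m M : ℕ) : ZMod m →+ ZMod M :=
  if h : m ∣ M then
    ZMod.lift m ⟨(M / m) • Int.castAddHom (ZMod M), by
      have hz : ((M / m * m : ℕ) : ZMod M) = 0 := by
        rw [Nat.div_mul_cancel h, ZMod.natCast_self]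
      simp only [AddMonoidHom.nsmul_apply, Int.coe_castAddHom, nsmul_eq_mul]
      push_cast at hz ⊢
      linear_combination hz⟩
  else 0

lemma zHom_natCast {m M : ℕ} (h : m ∣ M) (c : ℕ) :
    zHom m M ((c : ℕ) : ZMod m) = ((M / m * c : ℕ) : ZMod M) := by
  rw [zHom, dif_pos h]
  have : ((c : ℕ) : ZMod m) = ((c : ℤ) : ZMod m) := by push_cast; rfl
  rw [this, ZMod.lift_coe]
  simp only [AddMonoidHom.nsmul_apply, Int.coe_castAddHom, nsmul_eq_mul]
  push_cast
  ring

lemma zHom_zHom {a b c : ℕ} (ha : 0 < a) (hb : 0 < b) (hab : a ∣ b) (hbc : b ∣ c)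
    (x : ZMod a) : zHom b c (zHom a b x) = zHom a c x := by
  haveI : NeZero a := ⟨ha.ne'⟩
  have hx : x = ((x.val : ℕ) : ZMod a) := (ZMod.natCast_rightInverse x).symm
  obtain ⟨u, rfl⟩ := hab
  obtain ⟨v, rfl⟩ := hbc
  rw [hx, zHom_natCast (dvd_mul_right a u), zHom_natCast (dvd_mul_right (a*u) v),
    zHom_natCast ((dvd_mul_right a u).trans (dvd_mul_right (a*u) v))]
  rw [Nat.mul_div_cancel_left u ha, Nat.mul_div_cancel_left v hb, mul_assoc,
    Nat.mul_div_cancel_left (u*v) ha]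
  congr 1
  ring

lemma zHom_injective {a b : ℕ} (ha : 0 < a) (hb : b ≠ 0) (hab : a ∣ b) :
    Function.Injective (zHom a b) := by
  haveI : NeZero a := ⟨ha.ne'⟩
  have hord : addOrderOf ((b / a : ℕ) : ZMod b) = a := by
    rw [ZMod.addOrderOf_coe _ hb, Nat.gcd_eq_right (Nat.div_dvd_of_dvd hab),
      Nat.div_div_self hab hb]
  intro x y hxy
  have hker : ∀ z : ZMod a, zHom a b z = 0 → z = 0 := by
    intro z hz
    have hzv : z = ((z.val : ℕ) : ZMod a) := (ZMod.natCast_rightInverse z).symm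
    rw [hzv, zHom_natCast hab] at hz
    have : z.val • ((b / a : ℕ) : ZMod b) = 0 := by
      rw [nsmul_eq_mul]; push_cast at hz ⊢; linear_combination hz
    have hdvd : a ∣ z.val := by
      have h2 := addOrderOf_dvd_of_nsmul_eq_zero this
      rwa [hord] at h2
    rw [hzv, ZMod.natCast_eq_zero_iff]
    exact hdvd
  have := hker (x - y) (by rw [map_sub, hxy, sub_self])
  exact sub_eq_zero.mp this

noncomputable def ghom {k : ℕ} (d : Fin k → ℕ) (M : ℕ) : (∀ i, ZMod (d i)) →+ ZMod M :=
  ∑ i, (zHom (d i) M).comp (Pi.evalAddMonoidHom (fun i => ZMod (d i)) i)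

lemma ghom_apply {k : ℕ} (d : Fin k → ℕ) (M : ℕ) (x : ∀ i, ZMod (d i)) :
    ghom d M x = ∑ i, zHom (d i) M (x i) := by
  simp [ghom]

lemma lcm_pos' {k : ℕ} {d : Fin k → ℕ} (hd : ∀ i, 0 < d i) : 0 < univ.lcm d := by
  rcases Nat.eq_zero_or_pos (univ.lcm d) with h | h
  · rw [Finset.lcm_eq_zero_iff] at h
    obtain ⟨i, -, hi⟩ := h
    exact absurd hi ((hd i).ne')
  · exact h

lemma ghom_surjective {k : ℕ} (d : Fin k → ℕ) (hd : ∀ i, 0 < d i) :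
    Function.Surjective (ghom d (univ.lcm d)) := by
  set M := univ.lcm d with hM
  have hM0 : 0 < M := lcm_pos' hd
  haveI : NeZero M := ⟨hM0.ne'⟩
  set R := (ghom d M).range with hR
  set A : AddSubgroup ℤ := R.comap (Int.castAddHom (ZMod M)) with hA
  have hMA : (M : ℤ) ∈ A := by
    simp only [hA, AddSubgroup.mem_comap, Int.coe_castAddHom]
    have : (((M : ℤ)) : ZMod M) = 0 := by push_cast; exact ZMod.natCast_self M
    rw [this]; exact zero_mem R
  have hiA : ∀ i : Fin k, ((M / d i : ℕ) : ℤ) ∈ A := by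
    intro i
    simp only [hA, AddSubgroup.mem_comap, Int.coe_castAddHom]
    have : (((M / d i : ℕ) : ℤ) : ZMod M) = ghom d M (Pi.single i 1) := by
      rw [ghom_apply]
      rw [Finset.sum_eq_single i]
      · rw [Pi.single_eq_same, show (1 : ZMod (d i)) = ((1 : ℕ) : ZMod (d i)) by rw [Nat.cast_one],
          zHom_natCast (Finset.dvd_lcm (mem_univ i)), mul_one]
        exact Int.cast_natCast _
      · intro j _ hj
        rw [Pi.single_eq_of_ne hj, map_zero]
      · intro h; exact absurd (mem_univ i) h
    rw [this]
    exact AddMonoidHom.mem_range.mpr ⟨Pi.single i 1, rfl⟩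
  have key : ∀ s : Finset (Fin k), ((Nat.gcd M (s.gcd fun i => M / d i) : ℕ) : ℤ) ∈ A := by
    intro s
    induction s using Finset.induction_on with
    | empty => simpa using hMA
    | insert a s' hx ih =>
      rw [Finset.gcd_insert, gcd_eq_nat_gcd]
      have assoc : Nat.gcd M (Nat.gcd (M / d a) (s'.gcd fun i => M / d i))
          = Nat.gcd (M / d a) (Nat.gcd M (s'.gcd fun i => M / d i)) := by
        rw [← Nat.gcd_assoc, Nat.gcd_comm M (M / d a), Nat.gcd_assoc]
      rw [assoc]
      -- Bezout
      have bez : ∀ (x y : ℕ), ((x : ℤ) ∈ A) → ((y : ℤ) ∈ A) → ((Nat.gcd x y : ℕ) : ℤ) ∈ A := by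
        intro x y hx hy
        rw [Nat.gcd_eq_gcd_ab]
        have h := add_mem (A.zsmul_mem hx (Nat.gcdA x y)) (A.zsmul_mem hy (Nat.gcdB x y))
        simpa [zsmul_eq_mul, mul_comm] using h
      exact bez _ _ (hiA a) ih
  have hg1 : Nat.gcd M (univ.gcd fun i => M / d i) = 1 := by
    set g := Nat.gcd M (univ.gcd fun i => M / d i) with hg
    have hgM : g ∣ M := Nat.gcd_dvd_left _ _
    have hgpos : 0 < g := Nat.pos_of_ne_zero (by
      intro h0
      have := Nat.eq_zero_of_gcd_eq_zero_left h0
      exact hM0.ne' this)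
    have hdi : ∀ i : Fin k, d i ∣ M / g := by
      intro i
      have h1 : g ∣ M / d i := (Nat.gcd_dvd_right _ _).trans (Finset.gcd_dvd (mem_univ i))
      obtain ⟨t, ht⟩ := h1
      have hMdt : M = d i * (g * t) := by
        rw [← ht, Nat.mul_div_cancel' (Finset.dvd_lcm (mem_univ i))]
      refine ⟨t, ?_⟩
      rw [hMdt]
      rw [show d i * (g * t) = g * (d i * t) by ring, Nat.mul_div_cancel_left _ hgpos]
    have hMdvd : M ∣ M / g := Finset.lcm_dvd fun i _ => hdi i
    have h2 : M / g ∣ M := Nat.div_dvd_of_dvd hgM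
    have h3 : M / g = M := Nat.dvd_antisymm h2 hMdvd
    have := Nat.div_eq_self.mp h3
    rcases this with h | h
    · exact absurd h hM0.ne'
    · exact h
  have h1A : (1 : ℤ) ∈ A := by
    have := key univ
    rwa [hg1] at this
  have h1R : (1 : ZMod M) ∈ R := by
    simpa [hA, AddSubgroup.mem_comap] using h1A
  intro x
  have hxR : x ∈ R := by
    have hx : x = x.val • (1 : ZMod M) := by
      rw [nsmul_eq_mul, mul_one]
      exact (ZMod.natCast_rightInverse x).symm
    rw [hx]
    exact AddSubgroup.nsmul_mem R h1R _
  exact AddMonoidHom.mem_range.mp hxR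

lemma card_ker {k : ℕ} (d : Fin k → ℕ) (hd : ∀ i, 0 < d i) :
    Nat.card {x : ∀ i, ZMod (d i) // ghom d (univ.lcm d) x = 0} * univ.lcm d
      = ∏ i, d i := by
  haveI : ∀ i, NeZero (d i) := fun i => ⟨(hd i).ne'⟩
  set M := univ.lcm d with hM
  have h1 := AddSubgroup.card_eq_card_quotient_mul_card_addSubgroup
    (AddMonoidHom.ker (ghom d M))
  have h2 : Nat.card ((∀ i, ZMod (d i)) ⧸ AddMonoidHom.ker (ghom d M)) = M := by
    rw [Nat.card_congr
      (QuotientAddGroup.quotientKerEquivOfSurjective _ (ghom_surjective d hd)).toEquiv,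
      Nat.card_zmod]
  have h3 : Nat.card (∀ i, ZMod (d i)) = ∏ i, d i := by
    rw [Nat.card_pi]
    exact Finset.prod_congr rfl fun i _ => Nat.card_zmod _
  have h4 : Nat.card {x : ∀ i, ZMod (d i) // ghom d (univ.lcm d) x = 0}
      = Nat.card (AddMonoidHom.ker (ghom d M)) := by
    apply Nat.card_congr
    exact Equiv.subtypeEquivRight fun x => by
      simp [AddMonoidHom.mem_ker]
      exact Iff.rfl
  rw [h4, ← h3, h1, h2, mul_comm]

noncomputable def Gsum {k : ℕ} (n : Fin k → ℕ) (y : ∀ i, ZMod (n i)) : ZMod (univ.lcm n) :=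
  ∑ i, zHom (n i) (univ.lcm n) (y i)

lemma card_sol {k : ℕ} (n d : Fin k → ℕ) (hn : ∀ i, 0 < n i) (hdn : ∀ i, d i ∣ n i)
    (hd : ∀ i, 0 < d i) :
    Nat.card {y : ∀ i, ZMod (n i) // (∀ i, d i • y i = 0) ∧ Gsum n y = 0} * univ.lcm d
      = ∏ i, d i := by
  haveI : ∀ i, NeZero (n i) := fun i => ⟨(hn i).ne'⟩
  set L := univ.lcm n with hL
  set M := univ.lcm d with hM
  have hL0 : 0 < L := lcm_pos' hn
  have hM0 : 0 < M := lcm_pos' hd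
  have hML : M ∣ L := Finset.lcm_dvd fun i hi => (hdn i).trans (Finset.dvd_lcm hi)
  have factA : ∀ x : ∀ i, ZMod (d i),
      Gsum n (fun i => zHom (d i) (n i) (x i)) = zHom M L (ghom d M x) := by
    intro x
    rw [Gsum, ghom_apply, map_sum]
    refine Finset.sum_congr rfl fun i _ => ?_
    rw [zHom_zHom (hd i) (hn i) (hdn i) (Finset.dvd_lcm (mem_univ i)),
      zHom_zHom (hd i) hM0 (Finset.dvd_lcm (mem_univ i)) hML]
  have factB : ∀ (x : ∀ i, ZMod (d i)) (i : Fin k),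
      d i • zHom (d i) (n i) (x i) = 0 := by
    intro x i
    rw [← map_nsmul]
    have : (d i : ℕ) • x i = 0 := by
      rw [nsmul_eq_mul, ZMod.natCast_self, zero_mul]
    rw [this, map_zero]
  rw [← card_ker d hd]
  congr 1
  refine Nat.card_congr (Equiv.ofBijective
    (fun x : {x : ∀ i, ZMod (d i) // ghom d (univ.lcm d) x = 0} =>
    (⟨fun i => zHom (d i) (n i) (x.1 i),
      fun i => factB x.1 i,
      by rw [factA x.1, x.2, map_zero]⟩ :
      {y : ∀ i, ZMod (n i) // (∀ i, d i • y i = 0) ∧ Gsum n y = 0})) ?_).symm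
  constructor
  · intro x y h
    apply Subtype.ext; funext i
    have := congrFun (congrArg Subtype.val h) i
    exact zHom_injective (hd i) (hn i).ne' (hdn i) this
  · rintro ⟨y, hy1, hy2⟩
    have hvd : ∀ i, (n i / d i) ∣ (y i).val := by
      intro i
      have h0 := hy1 i
      have hyv : y i = (((y i).val : ℕ) : ZMod (n i)) := (ZMod.natCast_rightInverse _).symm
      rw [hyv, ← Nat.cast_smul_eq_nsmul (ZMod (n i))] at h0
      have h1 : ((d i * (y i).val : ℕ) : ZMod (n i)) = 0 := by
        push_cast
        rw [← smul_eq_mul]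
        exact h0
      rw [ZMod.natCast_eq_zero_iff] at h1
      have h2 : d i * (n i / d i) ∣ d i * (y i).val := by
        rw [Nat.mul_div_cancel' (hdn i)]; exact h1
      exact (Nat.mul_dvd_mul_iff_left (hd i)).mp h2
    set x : ∀ i, ZMod (d i) := fun i => (((y i).val / (n i / d i) : ℕ) : ZMod (d i)) with hx
    have hψ : ∀ i, zHom (d i) (n i) (x i) = y i := by
      intro i
      rw [hx, zHom_natCast (hdn i), Nat.mul_div_cancel' (hvd i)]
      exact ZMod.natCast_rightInverse _
    have hker : ghom d M x = 0 := by
      apply zHom_injective hM0 hL0.ne' hML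
      rw [map_zero, ← factA x]
      have : (fun i => zHom (d i) (n i) (x i)) = y := funext hψ
      rw [this]
      exact hy2
    exact ⟨⟨x, hker⟩, Subtype.ext (funext hψ)⟩

lemma moebius_filter_sum (N m : ℕ) (hN : N ≠ 0) (hm : m ∣ N) :
    ∑ e ∈ N.divisors, ((ArithmeticFunction.moebius (N / e) : ℤ) : ℚ) * (if m ∣ e then 1 else 0)
      = if m = N then 1 else 0 := by
  have hm0 : 0 < m := Nat.pos_of_dvd_of_pos hm (Nat.pos_of_ne_zero hN)
  have hNm0 : N / m ≠ 0 := (Nat.div_pos (Nat.le_of_dvd (Nat.pos_of_ne_zero hN) hm) hm0).ne'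
  simp only [mul_ite, mul_one, mul_zero]
  rw [← Finset.sum_filter]
  have reind : ∑ e ∈ N.divisors.filter (fun e => m ∣ e),
      ((ArithmeticFunction.moebius (N / e) : ℤ) : ℚ)
      = ∑ c ∈ (N / m).divisors, ((ArithmeticFunction.moebius ((N / m) / c) : ℤ) : ℚ) := by
    refine Finset.sum_nbij' (fun e => e / m) (fun c => m * c) ?_ ?_ ?_ ?_ ?_
    · intro e he
      rw [Finset.mem_filter, Nat.mem_divisors] at he
      obtain ⟨⟨heN, -⟩, hme⟩ := he
      rw [Nat.mem_divisors]
      obtain ⟨c, rfl⟩ := hme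
      obtain ⟨t, ht⟩ := heN
      refine ⟨⟨t, ?_⟩, hNm0⟩
      · show N / m = m * c / m * t
        rw [Nat.mul_div_cancel_left c hm0, ht, mul_assoc, Nat.mul_div_cancel_left _ hm0]
    · intro c hc
      rw [Nat.mem_divisors] at hc
      rw [Finset.mem_filter, Nat.mem_divisors]
      obtain ⟨⟨t, ht⟩, -⟩ := hc
      refine ⟨⟨⟨t, ?_⟩, hN⟩, Dvd.intro c rfl⟩
      rw [← Nat.mul_div_cancel' hm, ht]; ring
    · intro e he
      rw [Finset.mem_filter] at he
      exact Nat.mul_div_cancel' he.2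
    · intro c _
      exact Nat.mul_div_cancel_left c hm0
    · intro e he
      rw [Finset.mem_filter] at he
      congr 2
      rw [Nat.div_div_eq_div_mul, Nat.mul_div_cancel' he.2]
  rw [reind]
  have hsum : ∑ c ∈ (N / m).divisors, (ArithmeticFunction.moebius ((N / m) / c) : ℤ)
      = if N / m = 1 then 1 else 0 := by
    have h := congrArg (fun f : ArithmeticFunction ℤ => f (N / m))
      ArithmeticFunction.moebius_mul_coe_zeta
    simp only [ArithmeticFunction.coe_mul_zeta_apply, ArithmeticFunction.one_apply] at h
    exact (Nat.sum_div_divisors (N / m) ArithmeticFunction.moebius).trans h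
  have hcond : (N / m = 1) = (m = N) := by
    apply propext
    constructor
    · intro h
      have := Nat.mul_div_cancel' hm
      rw [h, mul_one] at this
      exact this
    · rintro rfl
      exact Nat.div_self (Nat.pos_of_ne_zero hN)
  have : ∑ c ∈ (N / m).divisors, ((ArithmeticFunction.moebius ((N / m) / c) : ℤ) : ℚ)
      = ((∑ c ∈ (N / m).divisors, (ArithmeticFunction.moebius ((N / m) / c) : ℤ) : ℤ) : ℚ) := by
    push_cast; rfl
  rw [this, hsum]
  simp only [hcond]
  split <;> norm_num

/-- `f(n₁,…,n_k) = ∑_{d_i ∣ n_i} μ(n₁/d₁)⋯μ(n_k/d_k) · d₁⋯d_k / lcm(d₁,…,d_k)`. -/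
noncomputable def ffun (k : ℕ) (n : Fin k → ℕ) : ℚ :=
  ∑ d ∈ Fintype.piFinset (fun i => (n i).divisors),
    (∏ i, ((ArithmeticFunction.moebius (n i / d i) : ℤ) : ℚ)) *
      (((∏ i, d i : ℕ) : ℚ) / ((Finset.univ.lcm d : ℕ) : ℚ))

theorem ffun_nonneg (k : ℕ) (n : Fin k → ℕ) (hn : ∀ i, 0 < n i) :
    0 ≤ ffun k n := by
  classical
  haveI : ∀ i, NeZero (n i) := fun i => ⟨(hn i).ne'⟩
  have hord : ∀ (y : ∀ i, ZMod (n i)) (i : Fin k), addOrderOf (y i) ∣ n i := by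
    intro y i
    rw [addOrderOf_dvd_iff_nsmul_eq_zero, nsmul_eq_mul, ZMod.natCast_self, zero_mul]
  have key : ffun k n = ∑ y : ∀ i, ZMod (n i),
      (if Gsum n y = 0 then (1:ℚ) else 0) *
        ∏ i, (if addOrderOf (y i) = n i then (1:ℚ) else 0) := by
    rw [ffun]
    have step1 : ∀ d ∈ Fintype.piFinset (fun i => (n i).divisors),
        (∏ i, ((ArithmeticFunction.moebius (n i / d i) : ℤ) : ℚ)) *
          (((∏ i, d i : ℕ) : ℚ) / ((Finset.univ.lcm d : ℕ) : ℚ))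
        = ∑ y : ∀ i, ZMod (n i), (if Gsum n y = 0 then (1:ℚ) else 0) *
            ∏ i, (((ArithmeticFunction.moebius (n i / d i) : ℤ) : ℚ) *
              (if d i • y i = 0 then (1:ℚ) else 0)) := by
      intro d hd
      have hmem : ∀ i, d i ∈ (n i).divisors := fun i => Fintype.mem_piFinset.mp hd i
      have hdn : ∀ i, d i ∣ n i := fun i => (Nat.mem_divisors.mp (hmem i)).1
      have hd0 : ∀ i, 0 < d i := fun i => Nat.pos_of_mem_divisors (hmem i)
      have hc := card_sol n d hn hdn hd0
      have hM0 : (0:ℚ) < ((univ.lcm d : ℕ) : ℚ) := by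
        exact_mod_cast lcm_pos' hd0
      have hratio : ((∏ i, d i : ℕ) : ℚ) / ((Finset.univ.lcm d : ℕ) : ℚ)
          = (Nat.card {y : ∀ i, ZMod (n i) //
              (∀ i, d i • y i = 0) ∧ Gsum n y = 0} : ℚ) := by
        rw [div_eq_iff hM0.ne']
        exact_mod_cast hc.symm
      have hcard : (Nat.card {y : ∀ i, ZMod (n i) //
          (∀ i, d i • y i = 0) ∧ Gsum n y = 0} : ℚ)
          = ∑ y : ∀ i, ZMod (n i),
              (if ((∀ i, d i • y i = 0) ∧ Gsum n y = 0) then (1:ℚ) else 0) := by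
        rw [Nat.card_eq_fintype_card, Fintype.card_subtype, Finset.card_filter]
        push_cast
        refine Finset.sum_congr rfl fun y _ => ?_
        split <;> norm_num
      rw [hratio, hcard, Finset.mul_sum]
      refine Finset.sum_congr rfl fun y _ => ?_
      have hsplit : (if ((∀ i, d i • y i = 0) ∧ Gsum n y = 0) then (1:ℚ) else 0)
          = (if Gsum n y = 0 then (1:ℚ) else 0) *
            ∏ i, (if d i • y i = 0 then (1:ℚ) else 0) := by
        rw [Fintype.prod_boole]
        by_cases h1 : Gsum n y = 0 <;> by_cases h2 : ∀ i, d i • y i = 0 <;>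
          simp [h1, h2]
      rw [hsplit, Finset.prod_mul_distrib]
      ring
    rw [Finset.sum_congr rfl step1, Finset.sum_comm]
    refine Finset.sum_congr rfl fun y _ => ?_
    rw [← Finset.mul_sum]
    congr 1
    rw [← Finset.prod_univ_sum (fun i => (n i).divisors)
      (fun i e => ((ArithmeticFunction.moebius (n i / e) : ℤ) : ℚ) *
        (if e • y i = 0 then (1:ℚ) else 0))]
    refine Finset.prod_congr rfl fun i _ => ?_
    have hcond : ∀ e : ℕ, (e • y i = 0) = (addOrderOf (y i) ∣ e) := by
      intro e
      rw [eq_iff_iff, ← addOrderOf_dvd_iff_nsmul_eq_zero]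
    calc ∑ e ∈ (n i).divisors, ((ArithmeticFunction.moebius (n i / e) : ℤ) : ℚ) *
            (if e • y i = 0 then (1:ℚ) else 0)
        = ∑ e ∈ (n i).divisors, ((ArithmeticFunction.moebius (n i / e) : ℤ) : ℚ) *
            (if addOrderOf (y i) ∣ e then (1:ℚ) else 0) := by
          refine Finset.sum_congr rfl fun e _ => ?_
          simp only [hcond e]
      _ = if addOrderOf (y i) = n i then (1:ℚ) else 0 :=
          moebius_filter_sum (n i) (addOrderOf (y i)) (hn i).ne' (hord y i)
  rw [key]
  refine Finset.sum_nonneg fun y _ => mul_nonneg ?_ ?_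
  · split <;> norm_num
  · refine Finset.prod_nonneg fun i _ => ?_
    split <;> norm_num
end

section
/- Let p be a prime and suppose v₁ = v₂ = ⋯ = v_ℓ > v_{ℓ+1} ≥ ⋯ ≥ v_k ≥ 1 with ℓ ≥ 2. Then f(p^{v₁},…,p^{v_k}) = p^{s'}(1 − 1/p)^k + (−1)^ℓ (1 − 1/p)^{k−ℓ}(p^{s'+1−ℓ} − p^{s'−ℓ}), where s' = v₂ + ⋯ + v_k and f(n₁,…,n_k) = ∑_{d_i|n_i} μ(n₁/d₁)⋯μ(n_k/d_k)·(d₁⋯d_k)/lcm(d₁,…,d_k). -/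
open Finset

lemma lcm_prime_pow_fin (p : ℕ) {k : ℕ} (b : Fin k → ℕ) (s : Finset (Fin k)) :
    s.lcm (fun i => p ^ b i) = p ^ (s.sup b) := by
  classical
  induction s using Finset.induction with
  | empty => simp
  | insert _ _ ha ih =>
    rename_i a s
    rw [Finset.lcm_insert, Finset.sup_insert, ih]
    rcases le_total (b a) (s.sup b) with h | h
    · rw [sup_eq_right.2 h]
      exact lcm_eq_right_iff _ _ (by simp) |>.2 (pow_dvd_pow p h)
    · rw [sup_eq_left.2 h]
      exact lcm_eq_left_iff _ _ (by simp) |>.2 (pow_dvd_pow p h)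

lemma card_filter_lt_fin (k ℓ : ℕ) (hℓk : ℓ ≤ k) :
    (Finset.univ.filter fun i : Fin k => (i : ℕ) < ℓ).card = ℓ := by
  classical
  rw [Finset.card_filter, Fin.sum_univ_eq_sum_range (fun i => if i < ℓ then 1 else 0),
    ← Finset.card_filter]
  have : (Finset.range k).filter (fun i => i < ℓ) = Finset.range ℓ := by
    ext x; simp only [Finset.mem_filter, Finset.mem_range]; omega
  rw [this, Finset.card_range]

theorem ffun_prime_powers_value (k ℓ : ℕ) (hk : 0 < k) (hℓ : 2 ≤ ℓ) (hℓk : ℓ ≤ k)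
    (p : ℕ) (hp : p.Prime) (v : Fin k → ℕ)
    (hpos : ∀ i, 1 ≤ v i)
    (hdec : ∀ i j : Fin k, i ≤ j → v j ≤ v i)
    (hfirst : ∀ i : Fin k, (i : ℕ) < ℓ → v i = v ⟨0, hk⟩)
    (hrest : ∀ i : Fin k, ℓ ≤ (i : ℕ) → v i < v ⟨0, hk⟩) :
    ffun k (fun i => p ^ v i) =
      (p : ℚ) ^ ((∑ i, v i) - v ⟨0, hk⟩) * (1 - 1 / (p : ℚ)) ^ k +
        (-1 : ℚ) ^ ℓ * (1 - 1 / (p : ℚ)) ^ (k - ℓ) *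
          ((p : ℚ) ^ ((((∑ i, v i) - v ⟨0, hk⟩ : ℕ) : ℤ) + 1 - (ℓ : ℤ)) -
            (p : ℚ) ^ ((((∑ i, v i) - v ⟨0, hk⟩ : ℕ) : ℤ) - (ℓ : ℤ))) := by
  classical
  have hpQ : (p:ℚ) ≠ 0 := Nat.cast_ne_zero.2 hp.pos.ne'
  set m := v ⟨0, hk⟩ with hm
  set s := ∑ i, v i with hs
  have hvm : ∀ i, v i ≤ m := fun i => hdec ⟨0,hk⟩ i (by simp [Fin.le_def])
  have hms : m ≤ s := Finset.single_le_sum (fun i _ => Nat.zero_le (v i)) (mem_univ (⟨0,hk⟩ : Fin k))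
  have hm1 : 1 ≤ m := hpos _
  -- Step 1: reindex divisors to exponents
  have step1 : ffun k (fun i => p ^ v i)
      = ∑ a ∈ Fintype.piFinset (fun i => Finset.range (v i + 1)),
          (∏ i, ((ArithmeticFunction.moebius (p ^ v i / p ^ a i) : ℤ) : ℚ)) *
            (((∏ i, p ^ a i : ℕ) : ℚ) /
              ((Finset.univ.lcm (fun i => p ^ a i) : ℕ) : ℚ)) := by
    rw [ffun]
    have hdiv : (fun i : Fin k => (p ^ v i).divisors)
        = fun i => (Finset.range (v i + 1)).image (p ^ ·) := by
      funext i
      rw [Nat.divisors_prime_pow hp, Finset.map_eq_image]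
      rfl
    rw [hdiv, Fintype.piFinset_image, Finset.sum_image]
    intro a _ b _ hab
    funext i
    exact Nat.pow_right_injective hp.two_le (congrFun hab i)
  -- Step 2: restrict to top two exponents (others give μ = 0)
  have step2 : ∀ (F : (Fin k → ℕ) → ℚ),
      (∀ a : Fin k → ℕ, (∀ i, a i ≤ v i) → (∃ i, a i + 2 ≤ v i) → F a = 0) →
      ∑ a ∈ Fintype.piFinset (fun i => Finset.range (v i + 1)), F a
        = ∑ e ∈ Fintype.piFinset (fun _ : Fin k => Finset.range 2),
            F (fun i => v i - e i) := by
    intro F hF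
    rw [← Finset.sum_subset
      (s₁ := Fintype.piFinset (fun i => (Finset.range 2).image (fun e => v i - e)))]
    · rw [show (fun i : Fin k => (Finset.range 2).image (fun e => v i - e))
          = fun i : Fin k => (Finset.range 2).image (fun e => (fun i e => v i - e) i e) from rfl,
        Fintype.piFinset_image, Finset.sum_image]
      intro a ha b hb hab
      funext i
      have ha' := Fintype.mem_piFinset.1 ha i
      have hb' := Fintype.mem_piFinset.1 hb i
      simp only [Finset.mem_range] at ha' hb'
      have h4 : v i - a i = v i - b i := congrFun hab i
      have := hpos i
      omega
    · intro a ha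
      simp only [Fintype.mem_piFinset, Finset.mem_image, Finset.mem_range] at ha ⊢
      intro i
      obtain ⟨e, he, hae⟩ := ha i
      omega
    · intro a ha hna
      simp only [Fintype.mem_piFinset, Finset.mem_range] at ha
      apply hF
      · intro i; have := ha i; omega
      · by_contra h
        push_neg at h
        apply hna
        simp only [Fintype.mem_piFinset, Finset.mem_image, Finset.mem_range]
        intro i
        have h1 := ha i
        have h2 := h i
        have h3 := hpos i
        by_cases hv : a i = v i
        · exact ⟨0, by omega, by omega⟩
        · exact ⟨1, by omega, by omega⟩
  -- the zero condition
  have hzero : ∀ a : Fin k → ℕ, (∀ i, a i ≤ v i) → (∃ i, a i + 2 ≤ v i) →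
      (∏ i, ((ArithmeticFunction.moebius (p ^ v i / p ^ a i) : ℤ) : ℚ)) *
        (((∏ i, p ^ a i : ℕ) : ℚ) /
          ((Finset.univ.lcm (fun i => p ^ a i) : ℕ) : ℚ)) = 0 := by
    intro a hle ⟨i0, hi0⟩
    apply mul_eq_zero_of_left
    apply Finset.prod_eq_zero (Finset.mem_univ i0)
    rw [Nat.pow_div (hle i0) hp.pos,
      ArithmeticFunction.moebius_apply_prime_pow hp (by omega)]
    rw [if_neg (by omega)]
    simp
  rw [step1, step2 _ hzero]
  -- Step 3: pointwise rewrite of the summand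
  have hpt : ∀ e ∈ Fintype.piFinset (fun _ : Fin k => Finset.range 2),
      (∏ i, ((ArithmeticFunction.moebius (p ^ v i / p ^ (v i - e i)) : ℤ) : ℚ)) *
        (((∏ i, p ^ (v i - e i) : ℕ) : ℚ) /
          ((Finset.univ.lcm (fun i => p ^ (v i - e i)) : ℕ) : ℚ))
      = (∏ i, ((-1 : ℚ)/p) ^ (e i)) * (p:ℚ) ^ ((s : ℤ) - (m : ℤ))
        + (if (∀ i : Fin k, (i : ℕ) < ℓ → e i = 1)
              then (∏ i, ((-1 : ℚ)/p) ^ (e i)) else 0) *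
            ((p:ℚ) ^ ((s : ℤ) - (m : ℤ) + 1) - (p:ℚ) ^ ((s : ℤ) - (m : ℤ))) := by
    intro e hel
    have he : ∀ i, e i ≤ 1 := by
      intro i
      have := Fintype.mem_piFinset.1 hel i
      simp only [Finset.mem_range] at this
      omega
    have hSe : ∑ i, e i ≤ s := Finset.sum_le_sum (fun i _ => (he i).trans (hpos i))
    have hmu : ∀ i, ((ArithmeticFunction.moebius (p ^ v i / p ^ (v i - e i)) : ℤ) : ℚ)
        = (-1 : ℚ) ^ (e i) := by
      intro i
      rw [Nat.pow_div (Nat.sub_le _ _) hp.pos,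
        show v i - (v i - e i) = e i by have := he i; have := hpos i; omega]
      have h1 := he i
      interval_cases h : e i
      · simp
      · simp [ArithmeticFunction.moebius_apply_prime hp]
    have hnum : (∏ i, p ^ (v i - e i) : ℕ) = p ^ (s - ∑ i, e i) := by
      rw [Finset.prod_pow_eq_pow_sum, Finset.sum_tsub_distrib _
        (fun i _ => (he i).trans (hpos i))]
    have hsup : (Finset.univ.sup fun i => v i - e i)
        = m - (if (∀ i : Fin k, (i : ℕ) < ℓ → e i = 1) then 1 else 0) := by
      split_ifs with hc
      · apply le_antisymm
        · apply Finset.sup_le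
          intro i _
          rcases lt_or_ge (i : ℕ) ℓ with h | h
          · rw [hfirst i h, hc i h]
          · have := hrest i h; omega
        · refine le_trans ?_ (Finset.le_sup (mem_univ ⟨0, hk⟩))
          rw [hc ⟨0, hk⟩ (show (0:ℕ) < ℓ by omega)]
      · push_neg at hc
        obtain ⟨i0, hi0, hei0⟩ := hc
        apply le_antisymm
        · exact Finset.sup_le fun i _ => le_trans (Nat.sub_le _ _) (hvm i)
        · refine le_trans ?_ (Finset.le_sup (mem_univ i0))
          have := he i0
          have : e i0 = 0 := by omega
          rw [this, hfirst i0 hi0]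
    have hlcm : (Finset.univ.lcm (fun i => p ^ (v i - e i)) : ℕ)
        = p ^ (m - (if (∀ i : Fin k, (i : ℕ) < ℓ → e i = 1) then 1 else 0)) := by
      rw [lcm_prime_pow_fin, hsup]
    rw [Finset.prod_congr rfl (fun i _ => hmu i), hnum, hlcm]
    have hprod : ∀ (e' : Fin k → ℕ), ∏ i, ((-1:ℚ)/p)^(e' i)
        = (∏ i, (-1:ℚ)^(e' i)) * ((p:ℚ)^((∑ i, e' i : ℕ) : ℤ))⁻¹ := by
      intro e'
      simp only [div_eq_mul_inv, mul_pow, inv_pow, Finset.prod_mul_distrib,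
        Finset.prod_inv_distrib, Finset.prod_pow_eq_pow_sum, zpow_natCast]
    rw [hprod]
    set A := ∏ i, (-1:ℚ)^(e i) with hA
    set Se := ∑ i, e i with hSe'
    have hcast1 : ((p:ℕ):ℚ) ^ (s - Se) = (p:ℚ) ^ ((s : ℤ) - (Se : ℤ)) := by
      rw [← zpow_natCast, Nat.cast_sub hSe]
    split_ifs with hc
    · have hcast2 : ((p:ℕ):ℚ) ^ (m - 1) = (p:ℚ) ^ ((m : ℤ) - 1) := by
        rw [← zpow_natCast, Nat.cast_sub hm1]; norm_num
      push_cast [hcast1, hcast2]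
      rw [div_eq_mul_inv, ← zpow_neg, ← zpow_add₀ hpQ, ← zpow_neg]
      have hr : A * (p:ℚ)^(-(Se:ℤ)) * (p:ℚ)^((s:ℤ) - m)
          + A * (p:ℚ)^(-(Se:ℤ)) * ((p:ℚ)^((s:ℤ) - m + 1) - (p:ℚ)^((s:ℤ) - m))
          = A * ((p:ℚ)^(-(Se:ℤ)) * (p:ℚ)^((s:ℤ) - m + 1)) := by ring
      rw [hr, ← zpow_add₀ hpQ]
      congr 2
      ring
    · have hcast2 : ((p:ℕ):ℚ) ^ (m - 0) = (p:ℚ) ^ ((m : ℤ)) := by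
        rw [← zpow_natCast]; norm_num
      push_cast [hcast1, hcast2]
      rw [div_eq_mul_inv, ← zpow_neg, ← zpow_add₀ hpQ, ← zpow_neg]
      rw [zero_mul, add_zero, mul_assoc, ← zpow_add₀ hpQ]
      congr 2
      ring
  rw [Finset.sum_congr rfl hpt, Finset.sum_add_distrib]
  -- Sum 1
  have hsum1 : ∑ e ∈ Fintype.piFinset (fun _ : Fin k => Finset.range 2),
      (∏ i, ((-1 : ℚ)/p) ^ (e i)) * (p:ℚ) ^ ((s : ℤ) - (m : ℤ))
      = (1 - 1/(p:ℚ)) ^ k * (p:ℚ) ^ ((s : ℤ) - (m : ℤ)) := by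
    rw [← Finset.sum_mul, ← Finset.prod_univ_sum]
    congr 1
    have : ∀ i : Fin k, ∑ x ∈ Finset.range 2, ((-1 : ℚ)/p) ^ x = 1 - 1/(p:ℚ) := by
      intro i
      rw [Finset.sum_range_succ, Finset.sum_range_one]
      ring
    rw [Finset.prod_congr rfl (fun i _ => this i), Finset.prod_const, Finset.card_univ,
      Fintype.card_fin]
  -- Sum 2
  have hsum2 : ∑ e ∈ Fintype.piFinset (fun _ : Fin k => Finset.range 2),
      (if (∀ i : Fin k, (i : ℕ) < ℓ → e i = 1)
          then (∏ i, ((-1 : ℚ)/p) ^ (e i)) else 0) *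
        ((p:ℚ) ^ ((s : ℤ) - (m : ℤ) + 1) - (p:ℚ) ^ ((s : ℤ) - (m : ℤ)))
      = ((-1 : ℚ)/p) ^ ℓ * (1 - 1/(p:ℚ)) ^ (k - ℓ) *
          ((p:ℚ) ^ ((s : ℤ) - (m : ℤ) + 1) - (p:ℚ) ^ ((s : ℤ) - (m : ℤ))) := by
    rw [← Finset.sum_mul]
    congr 1
    have hptw : ∀ e ∈ Fintype.piFinset (fun _ : Fin k => Finset.range 2),
        (if (∀ i : Fin k, (i : ℕ) < ℓ → e i = 1)
            then (∏ i, ((-1 : ℚ)/p) ^ (e i)) else 0)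
        = ∏ i : Fin k, (if (i : ℕ) < ℓ then (if e i = 1 then (-1:ℚ)/p else 0)
            else ((-1:ℚ)/p) ^ (e i)) := by
      intro e hel
      split_ifs with hc
      · apply Finset.prod_congr rfl
        intro i _
        by_cases h1 : (i : ℕ) < ℓ
        · rw [if_pos h1, hc i h1, if_pos rfl, pow_one]
        · rw [if_neg h1]
      · push_neg at hc
        obtain ⟨i0, hi0, hei0⟩ := hc
        symm
        apply Finset.prod_eq_zero (Finset.mem_univ i0)
        rw [if_pos hi0, if_neg hei0]
    rw [Finset.sum_congr rfl hptw]
    have hps := Finset.prod_univ_sum (fun _ : Fin k => Finset.range 2)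
      (fun (i : Fin k) (x : ℕ) => if (i : ℕ) < ℓ then (if x = 1 then (-1:ℚ)/p else 0)
        else ((-1:ℚ)/p) ^ x)
    rw [← hps]
    have : ∀ i : Fin k, ∑ x ∈ Finset.range 2,
        (if (i : ℕ) < ℓ then (if x = 1 then (-1:ℚ)/p else 0) else ((-1:ℚ)/p) ^ x)
        = (if (i : ℕ) < ℓ then (-1:ℚ)/p else 1 - 1/(p:ℚ)) := by
      intro i
      rw [Finset.sum_range_succ, Finset.sum_range_one]
      by_cases h : (i : ℕ) < ℓ
      · simp only [if_pos h]
        norm_num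
      · simp only [if_neg h]
        ring
    rw [Finset.prod_congr rfl (fun i _ => this i), Finset.prod_ite, Finset.prod_const,
      Finset.prod_const, card_filter_lt_fin k ℓ hℓk]
    have hcard2 : (Finset.univ.filter fun i : Fin k => ¬ (i : ℕ) < ℓ).card = k - ℓ := by
      have := Finset.card_filter_add_card_filter_not
        (s := (Finset.univ : Finset (Fin k))) (p := fun i : Fin k => (i : ℕ) < ℓ)
      rw [Finset.card_univ, Fintype.card_fin, card_filter_lt_fin k ℓ hℓk] at this
      omega
    rw [hcard2]
  rw [hsum1, hsum2]
  -- final algebra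
  have hc1 : (p:ℚ) ^ (s - m) = (p:ℚ) ^ ((s : ℤ) - (m : ℤ)) := by
    rw [← zpow_natCast, Nat.cast_sub hms]
  have hc2 : ((s - m : ℕ) : ℤ) = (s : ℤ) - (m : ℤ) := Nat.cast_sub hms
  rw [hc1, hc2]
  have hneg : ((-1 : ℚ)/p) ^ ℓ = (-1:ℚ)^ℓ * (p:ℚ) ^ (-(ℓ:ℤ)) := by
    rw [div_pow, div_eq_mul_inv, ← zpow_natCast (p:ℚ) ℓ, ← zpow_neg]
  rw [hneg]
  have e1 : (p:ℚ) ^ ((s:ℤ) - (m:ℤ) + 1 - (ℓ:ℤ))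
      = (p:ℚ) ^ (-(ℓ:ℤ)) * (p:ℚ) ^ ((s:ℤ) - (m:ℤ) + 1) := by
    rw [← zpow_add₀ hpQ]; congr 1; ring
  have e2 : (p:ℚ) ^ ((s:ℤ) - (m:ℤ) - (ℓ:ℤ))
      = (p:ℚ) ^ (-(ℓ:ℤ)) * (p:ℚ) ^ ((s:ℤ) - (m:ℤ)) := by
    rw [← zpow_add₀ hpQ]; congr 1; ring
  rw [e1, e2]
  ring
end

section
/- For a prime p and exponents v₁,…,v_k ≥ 0, f(p^{v₁},…,p^{v_k}) = ∑_{I ⊆ {1,…,k}, with e_i = 1 if i ∈ I else 0, and v_i ≥ e_i for all i} (−1)^{|I|} p^{(v₁+⋯+v_k) − |I| − max_i(v_i − e_i)}, where f is the k-variable Möbius transform of g(d₁,…,d_k) = d₁⋯d_k/lcm(d₁,…,d_k). -/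
open Finset

theorem lcm_pow_eq {ι : Type*} [DecidableEq ι] (p : ℕ) (s : Finset ι) (w : ι → ℕ) :
    s.lcm (fun i => p ^ w i) = p ^ s.sup w := by
  induction s using Finset.induction with
  | empty => simp
  | @insert a s ha ih =>
    rw [Finset.lcm_insert, ih, Finset.sup_insert]
    rcases le_total (w a) (s.sup w) with h | h
    · rw [sup_eq_right.mpr h]
      exact (lcm_eq_right_iff _ _ (by simp)).mpr (pow_dvd_pow p h)
    · rw [sup_eq_left.mpr h]
      exact (lcm_eq_left_iff _ _ (by simp)).mpr (pow_dvd_pow p h)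

theorem ffun_prime_powers_subset_sum (k : ℕ) (p : ℕ) (hp : p.Prime) (v : Fin k → ℕ) :
    ffun k (fun i => p ^ v i) =
      ∑ I ∈ (Finset.univ : Finset (Fin k)).powerset.filter
          (fun I => ∀ i ∈ I, 1 ≤ v i),
        (-1 : ℚ) ^ I.card *
          (p : ℚ) ^ (((∑ i, v i : ℕ) : ℤ) - (I.card : ℤ) -
            ((Finset.univ.sup (fun i => v i - (if i ∈ I then 1 else 0)) : ℕ) : ℤ)) := by
  classical
  have hp0 : (0:ℕ) < p := hp.pos
  have hpQ : (p : ℚ) ≠ 0 := by positivity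
  symm
  unfold ffun
  apply Finset.sum_bij_ne_zero
    (i := fun I _ _ => fun j => p ^ (v j - if j ∈ I then 1 else 0))
  · intro I hI _
    rw [Fintype.mem_piFinset]
    intro j
    rw [Nat.mem_divisors]
    exact ⟨pow_dvd_pow p (Nat.sub_le _ _), pow_ne_zero _ hp0.ne'⟩
  · intro I hI _ J hJ _ h
    simp only [Finset.mem_filter, Finset.mem_powerset] at hI hJ
    ext j
    have hc := congrFun h j
    have hinj := Nat.pow_right_injective hp.two_le hc
    constructor
    · intro hjI
      by_contra hjJ
      have h1 := hI.2 j hjI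
      rw [if_pos hjI, if_neg hjJ] at hinj
      omega
    · intro hjJ
      by_contra hjI
      have h1 := hJ.2 j hjJ
      rw [if_neg hjI, if_pos hjJ] at hinj
      omega
  · -- surjectivity
    intro d hd hg
    rw [Fintype.mem_piFinset] at hd
    have hdvd : ∀ j, ∃ a, a ≤ v j ∧ d j = p ^ a := by
      intro j
      obtain ⟨a, ha, hda⟩ := (Nat.dvd_prime_pow hp).mp (Nat.mem_divisors.mp (hd j)).1
      exact ⟨a, ha, hda⟩
    choose a ha hda using hdvd
    have hq : ∀ j, p ^ v j / d j = p ^ (v j - a j) := by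
      intro j; rw [hda j, Nat.pow_div (ha j) hp0]
    have hmu : ∀ j, v j - a j ≤ 1 := by
      intro j
      by_contra hcon
      apply hg
      have : (ArithmeticFunction.moebius (p ^ v j / d j) : ℚ) = 0 := by
        rw [hq j, ArithmeticFunction.moebius_apply_prime_pow hp (by omega)]
        simp [show v j - a j ≠ 1 by omega]
      rw [Finset.prod_eq_zero (Finset.mem_univ j) (by push_cast at this ⊢; exact_mod_cast this), zero_mul]
    refine ⟨Finset.univ.filter (fun j => a j ≠ v j), ?_, ?_, ?_⟩
    · simp only [Finset.mem_filter, Finset.mem_powerset]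
      refine ⟨Finset.subset_univ _, fun i hi => ?_⟩
      simp only [Finset.mem_filter, Finset.mem_univ, true_and, ne_eq] at hi
      have := ha i; omega
    · -- f value nonzero : automatic?
      intro hzero
      apply absurd hzero
      simp only [ne_eq, mul_eq_zero, not_or]
      constructor
      · exact pow_ne_zero _ (by norm_num)
      · exact zpow_ne_zero _ hpQ
    · funext j
      have h1 := ha j
      have h2 := hmu j
      rw [hda j]
      congr 1
      by_cases hj : a j = v j <;> simp [hj] <;> omega
  · -- term equality
    intro I hI _
    simp only [Finset.mem_filter, Finset.mem_powerset] at hI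
    set e : Fin k → ℕ := fun j => if j ∈ I then 1 else 0 with he
    set w : Fin k → ℕ := fun j => v j - e j with hw
    have hev : ∀ j, e j ≤ v j := by
      intro j
      by_cases hj : j ∈ I <;> simp only [he, hj, if_true, if_false]
      · exact hI.2 j hj
      · exact Nat.zero_le _
    have hmuprod : (∏ j, ((ArithmeticFunction.moebius (p ^ v j / p ^ w j) : ℤ) : ℚ))
        = (-1 : ℚ) ^ I.card := by
      have : ∀ j, ((ArithmeticFunction.moebius (p ^ v j / p ^ w j) : ℤ) : ℚ)
          = if j ∈ I then (-1 : ℚ) else 1 := by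
        intro j
        rw [Nat.pow_div (Nat.sub_le _ _) hp0]
        have : v j - w j = e j := by have := hev j; simp only [hw]; omega
        rw [this]
        by_cases hj : j ∈ I <;> simp only [he, hj, if_true, if_false]
        · rw [pow_one, ArithmeticFunction.moebius_apply_prime hp]; norm_num
        · simp
      rw [Finset.prod_congr rfl (fun j _ => this j)]
      rw [Finset.prod_ite_mem, Finset.univ_inter, Finset.prod_const]
    have hprod : (∏ j, p ^ w j) = p ^ (∑ j, w j) := by
      rw [Finset.prod_pow_eq_pow_sum]
    have hlcm : Finset.univ.lcm (fun j => p ^ w j) = p ^ (Finset.univ.sup w) := lcm_pow_eq p _ w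
    have hsum : (∑ j, w j) = (∑ j, v j) - I.card := by
      have h1 : (∑ j, e j) = I.card := by
        simp only [he, Finset.sum_ite_mem, Finset.univ_inter, Finset.sum_const, smul_eq_mul, mul_one]
      rw [← h1, hw, Finset.sum_tsub_distrib]
      intro j _; exact hev j
    have hcard : I.card ≤ ∑ j, v j := by
      rw [← hsum.symm] at *
      calc I.card = ∑ j, e j := by
            simp only [he, Finset.sum_ite_mem, Finset.univ_inter, Finset.sum_const, smul_eq_mul, mul_one]
        _ ≤ ∑ j, v j := Finset.sum_le_sum (fun j _ => hev j)
    have hsup : Finset.univ.sup w ≤ ∑ j, w j := by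
      apply Finset.sup_le
      intro j _
      exact Finset.single_le_sum (fun _ _ => Nat.zero_le _) (Finset.mem_univ j)
    rw [hmuprod, hlcm]
    rw [show (∏ j, p ^ w j : ℕ) = p ^ (∑ j, w j) from hprod]
    congr 1
    rw [show (((∑ i, v i : ℕ) : ℤ) - (I.card : ℤ) - ((Finset.univ.sup w : ℕ) : ℤ))
        = (((∑ j, w j) - Finset.univ.sup w : ℕ) : ℤ) by omega]
    rw [zpow_natCast, Nat.cast_pow, Nat.cast_pow,
      eq_div_iff (by positivity), ← pow_add]
    congr 1
    omega
end

section
/- The Dirichlet series of the Ramanujan sums in q for fixed n equals σ_{1−s}(n)/ζ(s): for Re(s) > 1, ∑_{q=1}^∞ c_q(n)/q^s = σ_{1−s}(n)/ζ(s), where σ_w(n) = ∑_{d|n} d^w. -/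
open Finset

/-- The Ramanujan sum `c_q(n) = ∑_{d ∣ gcd(q,n)} d·μ(q/d)`. -/
def ramanujanSum (q n : ℕ) : ℤ :=
  ∑ d ∈ (Nat.gcd q n).divisors, (d : ℤ) * ArithmeticFunction.moebius (q / d)

open ArithmeticFunction ArithmeticFunction.Moebius LSeries Function in
theorem ramanujan_dirichlet_series (n : ℕ) (hn : 0 < n) (s : ℂ) (hs : 1 < s.re) :
    ∑' q : ℕ+, ((ramanujanSum q n : ℤ) : ℂ) / ((q : ℕ) : ℂ) ^ s =
      (∑ d ∈ n.divisors, ((d : ℂ) ^ (1 - s))) / riemannZeta s := by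
  have hzeta : riemannZeta s ≠ 0 := riemannZeta_ne_zero_of_one_lt_re hs
  have hmu : LSeriesSummable (fun m : ℕ => (μ m : ℂ)) s :=
    ArithmeticFunction.LSeriesSummable_moebius_iff.mpr hs
  have hLmu : LSeries (fun m : ℕ => (μ m : ℂ)) s = (riemannZeta s)⁻¹ := by
    have h1 := ArithmeticFunction.LSeries_zeta_mul_Lseries_moebius hs
    rw [ArithmeticFunction.LSeries_zeta_eq_riemannZeta hs] at h1
    exact (inv_eq_of_mul_eq_one_right h1).symm
  -- the function over ℕ
  set F : ℕ → ℂ := fun q => ((ramanujanSum q n : ℤ) : ℂ) / (q : ℂ) ^ s with hF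
  -- G d q : term of divisor d
  set G : ℕ → ℕ → ℂ := fun d q =>
    (if d ∣ q then (d : ℂ) * (μ (q / d) : ℂ) else 0) / (q : ℂ) ^ s with hG
  have hFG : ∀ q : ℕ, q ≠ 0 → F q = ∑ d ∈ n.divisors, G d q := by
    intro q hq
    simp only [hF, hG, ramanujanSum]
    rw [← Finset.sum_div]
    congr 1
    push_cast
    rw [← Finset.sum_filter]
    apply Finset.sum_congr _ (fun _ _ => rfl)
    ext d
    simp only [Nat.mem_divisors, Finset.mem_filter]
    constructor
    · rintro ⟨hd, _⟩
      exact ⟨⟨hd.trans (Nat.gcd_dvd_right q n), hn.ne'⟩, hd.trans (Nat.gcd_dvd_left q n)⟩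
    · rintro ⟨⟨hdn, _⟩, hdq⟩
      exact ⟨Nat.dvd_gcd hdq hdn, Nat.gcd_ne_zero_left hq⟩
  -- rewrite each G d as a reindexed moebius series
  have hGd : ∀ d : ℕ, d ∈ n.divisors →
      (G d) ∘ (fun m : ℕ => d * m) = fun m => (d : ℂ) ^ (1 - s) * term (fun m : ℕ => (μ m : ℂ)) s m := by
    intro d hd
    have hd0 : d ≠ 0 := by
      rcases Nat.mem_divisors.mp hd with ⟨_, h⟩
      exact fun h0 => h (by simpa [h0] using Nat.eq_zero_of_zero_dvd (h0 ▸ (Nat.mem_divisors.mp hd).1))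
    have hdc : (d : ℂ) ≠ 0 := Nat.cast_ne_zero.mpr hd0
    funext m
    rcases eq_or_ne m 0 with rfl | hm
    · simp [hG, term_zero, ArithmeticFunction.moebius_apply_of_squarefree,
        Nat.mul_div_cancel_left 0 (Nat.pos_of_ne_zero hd0)]
    · have hdm : (d * m : ℕ) ≠ 0 := Nat.mul_ne_zero hd0 hm
      simp only [hG, Function.comp_apply, term_of_ne_zero hm,
        Nat.mul_div_cancel_left m (Nat.pos_of_ne_zero hd0), dvd_mul_right, if_true]
      rw [Nat.cast_mul, Complex.natCast_mul_natCast_cpow]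
      rw [Complex.cpow_sub _ _ hdc, Complex.cpow_one]
      have hms : (m : ℂ) ^ s ≠ 0 := fun h =>
        (Nat.cast_ne_zero.mpr hm) ((Complex.cpow_eq_zero_iff _ _).mp h).1
      have hds : (d : ℂ) ^ s ≠ 0 := fun h => hdc ((Complex.cpow_eq_zero_iff _ _).mp h).1
      field_simp
  have hsupp : ∀ d : ℕ, d ∈ n.divisors → support (G d) ⊆ Set.range (fun m : ℕ => d * m) := by
    intro d _ q hq
    simp only [hG, Function.mem_support] at hq
    by_cases hdq : d ∣ q
    · exact ⟨q / d, (Nat.mul_div_cancel' hdq)⟩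
    · simp [hdq] at hq
  have hinj : ∀ d : ℕ, d ∈ n.divisors → Function.Injective (fun m : ℕ => d * m) := by
    intro d hd
    have hd0 : d ≠ 0 := fun h0 => (Nat.mem_divisors.mp hd).2 (by
      simpa using Nat.eq_zero_of_zero_dvd (h0 ▸ (Nat.mem_divisors.mp hd).1))
    exact fun a b h => Nat.eq_of_mul_eq_mul_left (Nat.pos_of_ne_zero hd0) h
  have hGsum : ∀ d ∈ n.divisors, Summable (G d) := by
    intro d hd
    rw [← Function.Injective.summable_iff (hinj d hd)
      (fun x hx => by_contra fun h => hx (hsupp d hd h))]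
    rw [hGd d hd]
    exact hmu.mul_left _
  have hGtsum : ∀ d ∈ n.divisors, ∑' q : ℕ, G d q = (d : ℂ) ^ (1 - s) * (riemannZeta s)⁻¹ := by
    intro d hd
    rw [← Function.Injective.tsum_eq (hinj d hd) (hsupp d hd), ← Function.comp_def, hGd d hd,
      tsum_mul_left]
    rw [show ∑' m, term (fun m : ℕ => (μ m : ℂ)) s m = LSeries (fun m : ℕ => (μ m : ℂ)) s from rfl,
      hLmu]
  -- convert the ℕ+ sum to an ℕ sum
  have hF0 : F 0 = 0 := by
    simp [hF, ramanujanSum, Complex.zero_cpow (Complex.ne_zero_of_one_lt_re hs)]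
  have hPNat : ∑' q : ℕ+, F q = ∑' q : ℕ, F q := by
    apply Function.Injective.tsum_eq (f := F) (g := fun q : ℕ+ => (q : ℕ))
    · exact fun a b h => PNat.coe_injective h
    · intro q hq
      rcases Nat.eq_zero_or_pos q with rfl | hq0
      · exact absurd hF0 hq
      · exact ⟨⟨q, hq0⟩, rfl⟩
  calc ∑' q : ℕ+, F q = ∑' q : ℕ, F q := hPNat
    _ = ∑' q : ℕ, ∑ d ∈ n.divisors, G d q := by
        apply tsum_congr
        intro q
        rcases eq_or_ne q 0 with rfl | hq
        · rw [hF0]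
          symm
          apply Finset.sum_eq_zero
          intro d hd
          have := congrFun (hGd d hd) 0
          simpa using this
        · exact hFG q hq
    _ = ∑ d ∈ n.divisors, ∑' q : ℕ, G d q := Summable.tsum_finsetSum hGsum
    _ = ∑ d ∈ n.divisors, (d : ℂ) ^ (1 - s) * (riemannZeta s)⁻¹ :=
        Finset.sum_congr rfl hGtsum
    _ = (∑ d ∈ n.divisors, ((d : ℂ) ^ (1 - s))) / riemannZeta s := by
        rw [← Finset.sum_mul, div_eq_mul_inv]
end

section
/- The Cohen–Ramanujan sum has the divisor-sum representation: for positive integers q, n, β, ∑_{1 ≤ j ≤ q^β, (j,q^β)_β = 1} exp(2πi·jn/q^β) = ∑_{d | q, d^β | n} d^β·μ(q/d), where (m,n)_β is the largest ℓ^β dividing both m and n. -/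
open Finset

/-- The generalized gcd `(m,n)_β`: the largest `ℓ^β` dividing both `m` and `n`. -/
noncomputable def ggcd (m n β : ℕ) : ℕ :=
  sSup {x : ℕ | (∃ l : ℕ, x = l ^ β) ∧ x ∣ m ∧ x ∣ n}

private lemma lcm_pow_dvd {d m j β : ℕ} (hj : j ≠ 0) (hd : d ≠ 0) (hm : m ≠ 0)
    (h1 : d ^ β ∣ j) (h2 : m ^ β ∣ j) : Nat.lcm d m ^ β ∣ j := by
  have hL : Nat.lcm d m ≠ 0 := Nat.lcm_ne_zero hd hm
  rw [← Nat.factorization_le_iff_dvd (pow_ne_zero _ hL) hj]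
  rw [← Nat.factorization_le_iff_dvd (pow_ne_zero _ hd) hj] at h1
  rw [← Nat.factorization_le_iff_dvd (pow_ne_zero _ hm) hj] at h2
  rw [Nat.factorization_pow, Nat.factorization_lcm hd hm]
  rw [Nat.factorization_pow] at h1 h2
  rw [Finsupp.le_def] at h1 h2 ⊢
  intro p
  have h1p := h1 p
  have h2p := h2 p
  simp only [Finsupp.smul_apply, Finsupp.sup_apply, smul_eq_mul] at h1p h2p ⊢
  rcases le_total (d.factorization p) (m.factorization p) with h | h
  · rw [sup_eq_right.mpr h]; exact h2p
  · rw [sup_eq_left.mpr h]; exact h1p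

private lemma moebius_indicator (q j β : ℕ) (hq : q ≠ 0) (hj : j ≠ 0) (hβ : 0 < β) :
    ∑ d ∈ q.divisors.filter (fun d => d ^ β ∣ j), (ArithmeticFunction.moebius d : ℤ)
      = if ggcd j (q ^ β) β = 1 then 1 else 0 := by
  set T := q.divisors.filter (fun d => d ^ β ∣ j) with hT
  have h1T : (1 : ℕ) ∈ T := by
    simp [hT, Nat.mem_divisors, hq, Nat.one_dvd]
  have hne : T.Nonempty := ⟨1, h1T⟩
  set m := T.max' hne with hm
  have hmT : m ∈ T := T.max'_mem hne
  have hmq : m ∣ q := (Nat.mem_divisors.mp (mem_filter.mp hmT).1).1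
  have hmj : m ^ β ∣ j := (mem_filter.mp hmT).2
  have hm0 : m ≠ 0 := by
    rintro h
    exact hq (Nat.eq_zero_of_zero_dvd (h ▸ hmq))
  have hTeq : T = m.divisors := by
    ext d
    simp only [hT, mem_filter, Nat.mem_divisors]
    constructor
    · rintro ⟨⟨hdq, -⟩, hdj⟩
      have hd0 : d ≠ 0 := by
        rintro rfl
        exact hq (Nat.eq_zero_of_zero_dvd hdq)
      have hLmem : Nat.lcm d m ∈ T := by
        refine mem_filter.mpr ⟨Nat.mem_divisors.mpr ⟨Nat.lcm_dvd hdq hmq, hq⟩, ?_⟩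
        exact lcm_pow_dvd hj hd0 hm0 hdj hmj
      have hle : Nat.lcm d m ≤ m := T.le_max' _ hLmem
      have hge : m ≤ Nat.lcm d m :=
        Nat.le_of_dvd (Nat.pos_of_ne_zero (Nat.lcm_ne_zero hd0 hm0)) (Nat.dvd_lcm_right d m)
      have heq : Nat.lcm d m = m := le_antisymm hle hge
      exact ⟨heq ▸ Nat.dvd_lcm_left d m, hm0⟩
    · rintro ⟨hdm, -⟩
      exact ⟨⟨hdm.trans hmq, hq⟩, (pow_dvd_pow_of_dvd hdm β).trans hmj⟩
  have hgg : ggcd j (q ^ β) β = m ^ β := by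
    apply IsGreatest.csSup_eq
    constructor
    · exact ⟨⟨m, rfl⟩, hmj, pow_dvd_pow_of_dvd hmq β⟩
    · rintro x ⟨⟨l, rfl⟩, hxj, hxq⟩
      have hlq : l ∣ q := (Nat.pow_dvd_pow_iff hβ.ne').mp hxq
      have hlT : l ∈ T := mem_filter.mpr ⟨Nat.mem_divisors.mpr ⟨hlq, hq⟩, hxj⟩
      exact Nat.pow_le_pow_left (T.le_max' _ hlT) β
  have hsum : ∑ d ∈ T, (ArithmeticFunction.moebius d : ℤ) = if m = 1 then 1 else 0 := by
    rw [hTeq]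
    have h2 : ((ArithmeticFunction.moebius * ArithmeticFunction.zeta : ArithmeticFunction ℤ)) m
        = (1 : ArithmeticFunction ℤ) m := by
      rw [ArithmeticFunction.moebius_mul_coe_zeta]
    rw [ArithmeticFunction.coe_mul_zeta_apply, ArithmeticFunction.one_apply] at h2
    exact_mod_cast h2
  rw [hsum, hgg]
  have : m ^ β = 1 ↔ m = 1 := pow_eq_one_iff.trans (or_iff_left hβ.ne')
  simp only [this]

private lemma sum_exp_Icc (M n : ℕ) (hM : M ≠ 0) :
    ∑ k ∈ Finset.Icc 1 M, Complex.exp (2 * Real.pi * Complex.I * (k * n) / (M : ℕ))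
      = if M ∣ n then ((M : ℕ) : ℂ) else 0 := by
  have hMC : (M : ℂ) ≠ 0 := Nat.cast_ne_zero.mpr hM
  set x : ℂ := Complex.exp (2 * Real.pi * Complex.I * n / M) with hx
  have hterm : ∀ k : ℕ, Complex.exp (2 * Real.pi * Complex.I * (k * n) / (M : ℕ)) = x ^ k := by
    intro k
    rw [hx, ← Complex.exp_nat_mul]
    congr 1
    push_cast
    ring
  have hxM : x ^ M = 1 := by
    rw [hx, ← Complex.exp_nat_mul]
    have h : (M : ℂ) * (2 * Real.pi * Complex.I * n / M) = (n : ℤ) * (2 * Real.pi * Complex.I) := by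
      push_cast
      field_simp
    rw [h]
    exact Complex.exp_int_mul_two_pi_mul_I n
  by_cases hdvd : M ∣ n
  · have hx1 : x = 1 := by
      obtain ⟨c, rfl⟩ := hdvd
      rw [hx]
      have h : 2 * (Real.pi : ℂ) * Complex.I * (↑(M * c)) / M = (c : ℤ) * (2 * Real.pi * Complex.I) := by
        push_cast
        field_simp
      rw [h]
      exact Complex.exp_int_mul_two_pi_mul_I c
    rw [Finset.sum_congr rfl fun k _ => hterm k, if_pos hdvd]
    simp [hx1, Nat.card_Icc]
  · have hx1 : x ≠ 1 := by
      intro h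
      rw [hx, Complex.exp_eq_one_iff] at h
      obtain ⟨c, hc⟩ := h
      apply hdvd
      have hpi : (2 * (Real.pi : ℂ) * Complex.I) ≠ 0 := by
        simp [Real.pi_ne_zero, Complex.I_ne_zero, Complex.ofReal_ne_zero]
      have h2 : (2 * (Real.pi : ℂ) * Complex.I) * n = (2 * (Real.pi : ℂ) * Complex.I) * (c * M) := by
        field_simp at hc
        linear_combination (2 * (Real.pi : ℂ) * Complex.I) * hc
      have h3 : (n : ℂ) = (c : ℂ) * M := mul_left_cancel₀ hpi h2
      have h4 : (n : ℤ) = c * (M : ℤ) := by exact_mod_cast h3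
      have h5 : (M : ℤ) ∣ (n : ℤ) := ⟨c, by linarith⟩
      exact_mod_cast h5
    rw [Finset.sum_congr rfl fun k _ => hterm k, if_neg hdvd]
    rw [show Finset.Icc 1 M = Finset.Ico 1 (M + 1) from (Finset.Ico_add_one_right_eq_Icc (a := 1) (b := M)).symm]
    rw [geom_sum_Ico hx1 (by omega)]
    rw [pow_succ, hxM, one_mul, pow_one, sub_self, zero_div]

private lemma innerSumCR (q d n β : ℕ) (hq : q ≠ 0) (hβ : 0 < β) (hd : d ∣ q) :
    ∑ j ∈ (Finset.Icc 1 (q ^ β)).filter (fun j => d ^ β ∣ j),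
      Complex.exp (2 * Real.pi * Complex.I * (j * n) / ((q ^ β : ℕ) : ℂ))
    = if (q / d) ^ β ∣ n then (((q / d) ^ β : ℕ) : ℂ) else 0 := by
  have hd0 : d ≠ 0 := by
    rintro rfl
    exact hq (Nat.eq_zero_of_zero_dvd hd)
  have hqd0 : q / d ≠ 0 := by
    have := Nat.div_mul_cancel hd
    intro h
    rw [h, zero_mul] at this
    exact hq this.symm
  set M := (q / d) ^ β with hM
  have hM0 : M ≠ 0 := pow_ne_zero _ hqd0
  have hD0 : d ^ β ≠ 0 := pow_ne_zero _ hd0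
  have hqd : q ^ β = d ^ β * M := by rw [hM, ← mul_pow, Nat.mul_div_cancel' hd]
  rw [← sum_exp_Icc M n hM0]
  have hset : (Finset.Icc 1 (q ^ β)).filter (fun j => d ^ β ∣ j)
      = (Finset.Icc 1 M).map ⟨fun k => d ^ β * k,
          fun a b h => Nat.eq_of_mul_eq_mul_left (Nat.pos_of_ne_zero hD0) h⟩ := by
    ext j
    simp only [mem_filter, Finset.mem_Icc, Finset.mem_map, Function.Embedding.coeFn_mk]
    constructor
    · rintro ⟨⟨hj1, hj2⟩, k, rfl⟩
      refine ⟨k, ⟨?_, ?_⟩, rfl⟩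
      · rcases Nat.eq_zero_or_pos k with rfl | h
        · omega
        · exact h
      · rw [hqd] at hj2
        exact Nat.le_of_mul_le_mul_left hj2 (Nat.pos_of_ne_zero hD0)
    · rintro ⟨k, ⟨hk1, hk2⟩, rfl⟩
      refine ⟨⟨?_, ?_⟩, Dvd.intro k rfl⟩
      · have : d ^ β * k ≠ 0 := Nat.mul_ne_zero hD0 (by omega)
        show 1 ≤ d ^ β * k
        omega
      · rw [hqd]
        exact Nat.mul_le_mul_left _ hk2
  rw [hset, Finset.sum_map]
  refine Finset.sum_congr rfl fun k hk => ?_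
  show Complex.exp (2 * Real.pi * Complex.I * (((d ^ β * k : ℕ) : ℂ) * n) / ((q ^ β : ℕ) : ℂ)) = Complex.exp (2 * Real.pi * Complex.I * (k * n) / (M : ℕ))
  congr 1
  have h1 : ((q ^ β : ℕ) : ℂ) = ((d : ℂ)) ^ β * (M : ℂ) := by
    rw [hqd]; push_cast; ring
  have h2 : ((d : ℂ)) ^ β ≠ 0 := pow_ne_zero _ (Nat.cast_ne_zero.mpr hd0)
  have h3 : (M : ℂ) ≠ 0 := Nat.cast_ne_zero.mpr hM0
  rw [h1]
  push_cast
  field_simp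

theorem cohen_ramanujan_divisor_sum (q n β : ℕ) (hq : 0 < q) (hn : 0 < n) (hβ : 0 < β) :
    ∑ j ∈ (Finset.Icc 1 (q ^ β)).filter (fun j => ggcd j (q ^ β) β = 1),
      Complex.exp (2 * Real.pi * Complex.I * (j * n) / (q ^ β : ℕ)) =
    ∑ d ∈ q.divisors.filter (fun d => d ^ β ∣ n),
      ((d ^ β : ℕ) : ℂ) * ((ArithmeticFunction.moebius (q / d) : ℤ) : ℂ) := by
  have hq0 : q ≠ 0 := hq.ne'
  calc
    ∑ j ∈ (Finset.Icc 1 (q ^ β)).filter (fun j => ggcd j (q ^ β) β = 1),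
        Complex.exp (2 * Real.pi * Complex.I * (j * n) / (q ^ β : ℕ))
      = ∑ j ∈ Finset.Icc 1 (q ^ β), ∑ d ∈ q.divisors,
          (if d ^ β ∣ j then ((ArithmeticFunction.moebius d : ℤ) : ℂ)
            * Complex.exp (2 * Real.pi * Complex.I * (j * n) / (q ^ β : ℕ)) else 0) := by
        rw [Finset.sum_filter]
        refine Finset.sum_congr rfl fun j hj => ?_
        have hj1 : j ≠ 0 := by
          have := (Finset.mem_Icc.mp hj).1; omega
        have h := moebius_indicator q j β hq0 hj1 hβ
        rw [← Finset.sum_filter, ← Finset.sum_mul]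
        rw [show ((∑ d ∈ q.divisors.filter (fun d => d ^ β ∣ j),
            ((ArithmeticFunction.moebius d : ℤ) : ℂ)))
          = (((∑ d ∈ q.divisors.filter (fun d => d ^ β ∣ j),
            (ArithmeticFunction.moebius d : ℤ)) : ℤ) : ℂ) from (Int.cast_sum _ _).symm]
        rw [h]
        split_ifs <;> simp
    _ = ∑ d ∈ q.divisors, ((ArithmeticFunction.moebius d : ℤ) : ℂ)
          * (if (q / d) ^ β ∣ n then (((q / d) ^ β : ℕ) : ℂ) else 0) := by
        rw [Finset.sum_comm]
        refine Finset.sum_congr rfl fun d hd => ?_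
        obtain ⟨hdq, -⟩ := Nat.mem_divisors.mp hd
        rw [← innerSumCR q d n β hq0 hβ hdq, Finset.mul_sum, ← Finset.sum_filter]
    _ = ∑ d ∈ q.divisors, ((ArithmeticFunction.moebius (q / d) : ℤ) : ℂ)
          * (if d ^ β ∣ n then ((d ^ β : ℕ) : ℂ) else 0) := by
        rw [← Nat.sum_div_divisors q (fun d => ((ArithmeticFunction.moebius (q / d) : ℤ) : ℂ)
          * (if d ^ β ∣ n then ((d ^ β : ℕ) : ℂ) else 0))]
        refine Finset.sum_congr rfl fun d hd => ?_
        obtain ⟨hdq, -⟩ := Nat.mem_divisors.mp hd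
        rw [Nat.div_div_self hdq hq0]
    _ = ∑ d ∈ q.divisors.filter (fun d => d ^ β ∣ n),
          ((d ^ β : ℕ) : ℂ) * ((ArithmeticFunction.moebius (q / d) : ℤ) : ℂ) := by
        rw [Finset.sum_filter]
        refine Finset.sum_congr rfl fun d hd => ?_
        split_ifs <;> ring
end
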